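/- For every permutation σ of {1, …, r} and every ε ∈ 𝓔, the function σ·ε again belongs to 𝓔, so that (σ,ε) ↦ σ·ε defines an action of the symmetric group S_r on 𝓔; moreover this action is transitive: for all ε, ε' ∈ 𝓔 there exists a permutation σ of {1, …, r} with ε' = σ·ε. -/

import Mathlib

/-- The set 𝓔 of functions `ε : {1,…,r} × J → {0,1}` (indexed by `Fin r` and the
subtype of members of `J`), such that each column `j` sums to `j` and each row is
nondecreasing in `j ∈ J`. -/
def IsE (r : ℕ) (J : Finset ℕ) (ε : Fin r → {j // j ∈ J} → ℕ) : Prop :=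
  (∀ k j, ε k j ≤ 1) ∧
  (∀ j : {j // j ∈ J}, ∑ k : Fin r, ε k j = (j : ℕ)) ∧
  (∀ (k : Fin r) (j j' : {j // j ∈ J}), (j : ℕ) ≤ (j' : ℕ) → ε k j ≤ ε k j')

/-- If the list of values of `g` is a permutation of that of `f`, then `g = f ∘ σ`. -/
lemma exists_perm_comp_of_perm {n : ℕ} {f g : Fin n → ℕ}
    (h : (List.ofFn g).Perm (List.ofFn f)) : ∃ σ : Equiv.Perm (Fin n), g = f ∘ σ := by
  set σf := Tuple.sort f
  set σg := Tuple.sort g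
  have hsf : Monotone (f ∘ σf) := Tuple.monotone_sort f
  have hsg : Monotone (g ∘ σg) := Tuple.monotone_sort g
  have hperm : (List.ofFn (f ∘ σf)).Perm (List.ofFn (g ∘ σg)) :=
    ((σf.ofFn_comp_perm f).trans h.symm).trans (σg.ofFn_comp_perm g).symm
  have heq : f ∘ σf = g ∘ σg :=
    List.ofFn_injective (List.Perm.eq_of_sortedLE hsf.sortedLE_ofFn hsg.sortedLE_ofFn hperm)
  refine ⟨σf * σg⁻¹, funext fun x => ?_⟩
  have := congrFun heq (σg⁻¹ x)
  simpa using this.symm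

/-- `(σ, ε) ↦ σ·ε`, `(σ·ε)(k,j) = ε(σ⁻¹ k, j)`, maps 𝓔 to 𝓔, defines an
action of the symmetric group on 𝓔, and this action is transitive. -/
theorem stmt_2 (r : ℕ) (hr : 1 ≤ r) (J : Finset ℕ)
    (hJ : J ⊆ Finset.Icc 1 r) (hrJ : r ∈ J) :
    (∀ (σ : Equiv.Perm (Fin r)) (ε : Fin r → {j // j ∈ J} → ℕ),
        IsE r J ε → IsE r J (fun k j => ε (σ⁻¹ k) j)) ∧
    (∀ ε : Fin r → {j // j ∈ J} → ℕ,
        (fun k j => ε ((1 : Equiv.Perm (Fin r))⁻¹ k) j) = ε) ∧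
    (∀ (σ τ : Equiv.Perm (Fin r)) (ε : Fin r → {j // j ∈ J} → ℕ),
        (fun k j => ε ((σ * τ)⁻¹ k) j) =
          (fun k j => (fun k' j' => ε (τ⁻¹ k') j') (σ⁻¹ k) j)) ∧
    (∀ ε ε' : Fin r → {j // j ∈ J} → ℕ, IsE r J ε → IsE r J ε' →
        ∃ σ : Equiv.Perm (Fin r), ε' = fun k j => ε (σ⁻¹ k) j) := by
  classical
  refine ⟨?_, ?_, ?_, ?_⟩
  · rintro σ ε ⟨h1, h2, h3⟩
    refine ⟨fun k j => h1 _ j, fun j => ?_, fun k j j' hjj' => h3 _ j j' hjj'⟩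
    rw [← h2 j]
    exact Equiv.sum_comp σ⁻¹ (fun k => ε k j)
  · intro ε; rfl
  · intro σ τ ε; funext k j; simp [mul_comm]
  -- transitivity
  · -- key construction: the threshold function of an `ε ∈ 𝓔`
    have key : ∀ ε : Fin r → {j // j ∈ J} → ℕ, IsE r J ε →
        ∃ t : Fin r → ℕ, (∀ k, t k ∈ J) ∧
          (∀ (k : Fin r) (j : {j // j ∈ J}), ε k j = if t k ≤ (j : ℕ) then 1 else 0) ∧
          (∀ j : {j // j ∈ J}, (Finset.univ.filter fun k => t k ≤ (j : ℕ)).card = (j : ℕ)) := by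
      rintro ε ⟨h1, h2, h3⟩
      -- every entry of column r is 1
      have hcolr : ∀ k, ε k ⟨r, hrJ⟩ = 1 := by
        intro k
        by_contra hk
        have hklt : ε k ⟨r, hrJ⟩ < 1 := lt_of_le_of_ne (h1 k _) hk
        have : ∑ k : Fin r, ε k ⟨r, hrJ⟩ < ∑ _k : Fin r, 1 :=
          Finset.sum_lt_sum (fun i _ => h1 i _) ⟨k, Finset.mem_univ k, hklt⟩
        rw [h2 ⟨r, hrJ⟩] at this
        simp at this
      have hex : ∀ k : Fin r, ∃ j, ∃ hj : j ∈ J, ε k ⟨j, hj⟩ = 1 := fun k => ⟨r, hrJ, hcolr k⟩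
      set t : Fin r → ℕ := fun k => Nat.find (hex k) with ht
      have htmem : ∀ k, t k ∈ J := fun k => (Nat.find_spec (hex k)).1
      have htone : ∀ k, ε k ⟨t k, htmem k⟩ = 1 := fun k => (Nat.find_spec (hex k)).2
      have hval : ∀ (k : Fin r) (j : {j // j ∈ J}), ε k j = if t k ≤ (j : ℕ) then 1 else 0 := by
        intro k j
        split_ifs with hle
        · exact le_antisymm (h1 k j) ((htone k ▸ h3 k ⟨t k, htmem k⟩ j hle))
        · have hne1 : ε k j ≠ 1 := fun h1' =>
            hle (Nat.find_min' (hex k) ⟨j.2, by rwa [Subtype.coe_eta]⟩)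
          have := h1 k j
          omega
      refine ⟨t, htmem, hval, fun j => ?_⟩
      have := h2 j
      rw [Finset.sum_congr rfl (fun k _ => hval k j)] at this
      rw [Finset.card_filter]
      exact this
    intro ε ε' hε hε'
    obtain ⟨t, htJ, htv, htc⟩ := key ε hε
    obtain ⟨t', htJ', htv', htc'⟩ := key ε' hε'
    -- the counting functions of t and t' agree at every natural number
    have hcount : ∀ n : ℕ, (Finset.univ.filter fun k : Fin r => t k ≤ n).card =
        (Finset.univ.filter fun k : Fin r => t' k ≤ n).card := by
      intro n
      by_cases hne : (J.filter (· ≤ n)).Nonempty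
      · set m := (J.filter (· ≤ n)).max' hne with hm
        have hmJ : m ∈ J := (Finset.mem_filter.1 ((J.filter (· ≤ n)).max'_mem hne)).1
        have hmn : m ≤ n := (Finset.mem_filter.1 ((J.filter (· ≤ n)).max'_mem hne)).2
        have hiff : ∀ s : Fin r → ℕ, (∀ k, s k ∈ J) →
            (Finset.univ.filter fun k : Fin r => s k ≤ n) =
            (Finset.univ.filter fun k : Fin r => s k ≤ m) := by
          intro s hs
          ext k
          simp only [Finset.mem_filter, Finset.mem_univ, true_and]
          constructor
          · intro h
            exact Finset.le_max' (J.filter (· ≤ n)) (s k)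
              (Finset.mem_filter.2 ⟨hs k, show s k ≤ n from h⟩)
          · intro h; exact h.trans hmn
        rw [hiff t htJ, hiff t' htJ', htc ⟨m, hmJ⟩, htc' ⟨m, hmJ⟩]
      · have hiff : ∀ s : Fin r → ℕ, (∀ k, s k ∈ J) →
            (Finset.univ.filter fun k : Fin r => s k ≤ n) = ∅ := by
          intro s hs
          apply Finset.filter_eq_empty_iff.2
          intro k _ h
          exact hne ⟨s k, Finset.mem_filter.2 ⟨hs k, show s k ≤ n from h⟩⟩
        rw [hiff t htJ, hiff t' htJ']
    -- hence the counting functions for strict inequality agree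
    have hcountlt : ∀ n : ℕ, (Finset.univ.filter fun k : Fin r => t k < n).card =
        (Finset.univ.filter fun k : Fin r => t' k < n).card := by
      intro n
      cases n with
      | zero => simp
      | succ m =>
        simp only [Nat.lt_succ_iff]
        exact hcount m
    -- hence exact-value counts agree
    have hcounteq : ∀ n : ℕ, (Finset.univ.filter fun k : Fin r => t k = n).card =
        (Finset.univ.filter fun k : Fin r => t' k = n).card := by
      intro n
      have hsplit : ∀ s : Fin r → ℕ,
          (Finset.univ.filter fun k : Fin r => s k ≤ n).card =
          (Finset.univ.filter fun k : Fin r => s k < n).card +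
          (Finset.univ.filter fun k : Fin r => s k = n).card := by
        intro s
        rw [← Finset.card_union_of_disjoint]
        · congr 1
          rw [← Finset.filter_or]
          apply Finset.filter_congr
          intro k _
          simp [Nat.lt_succ_iff, le_iff_lt_or_eq]
        · rw [Finset.disjoint_filter]
          intro k _ hlt heq
          omega
      have h1 := hsplit t
      have h2 := hsplit t'
      have := hcount n
      have := hcountlt n
      omega
    -- the lists of values of `t'` and `t` are permutations of each other
    have hperm : (List.ofFn t').Perm (List.ofFn t) := by
      rw [List.perm_iff_count]
      intro a
      have hc : ∀ s : Fin r → ℕ, List.count a (List.ofFn s) =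
          (Finset.univ.filter fun k : Fin r => s k = a).card := by
        intro s
        rw [← Multiset.coe_count, ← Fin.univ_val_map, Multiset.count_map,
          Finset.card_def, Finset.filter_val]
        congr 1
        apply Multiset.filter_congr
        intro x _
        exact eq_comm
      rw [hc t', hc t, hcounteq a]
    obtain ⟨σ, hσ⟩ := exists_perm_comp_of_perm hperm
    refine ⟨σ⁻¹, funext fun k => funext fun j => ?_⟩
    rw [htv' k j, htv (σ⁻¹⁻¹ k) j, hσ]
    simp
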